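/- Let k be a field and C a k-coalgebra. Define coHH₀(C) as the kernel of Δ − τ∘Δ: C → C ⊗ C, where τ swaps tensor factors. Then for c ∈ C, the element c lies in coHH₀(C) if and only if (f * g)(c) = (g * f)(c) for all f, g ∈ C*, where * is the convolution product. Consequently there is a well-defined surjective k-linear map HH₀(C*) = C*/[C*, C*] → (coHH₀(C))* induced by evaluation. -/

import Mathlib

open TensorProduct

variable {k C : Type*}

/-- The convolution product on the linear dual of a coalgebra. -/
noncomputable def conv [Field k] [AddCommGroup C] [Module k C] [Coalgebra k C]
    (f g : Module.Dual k C) : Module.Dual k C :=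
  (LinearMap.mul' k k) ∘ₗ (TensorProduct.map f g) ∘ₗ (Coalgebra.comul (R := k) (A := C))

/-- `coHH₀(C) = ker(Δ − τ∘Δ)`, the subspace of cocommuting elements. -/
noncomputable def coHH0 (k C : Type*) [Field k] [AddCommGroup C] [Module k C]
    [Coalgebra k C] : Submodule k C :=
  LinearMap.ker ((Coalgebra.comul (R := k) (A := C)) -
    (TensorProduct.comm k C C).toLinearMap ∘ₗ (Coalgebra.comul (R := k) (A := C)))

/-- The commutator subspace `[C*, C*]` of the convolution algebra. -/
noncomputable def commutatorSub (k C : Type*) [Field k] [AddCommGroup C] [Module k C]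
    [Coalgebra k C] : Submodule k (Module.Dual k C) :=
  Submodule.span k {x | ∃ f g : Module.Dual k C, x = conv f g - conv g f}

/-- Evaluation of a pair of functionals on a tensor. -/
noncomputable def evalD [Field k] [AddCommGroup C] [Module k C]
    (f g : Module.Dual k C) : C ⊗[k] C →ₗ[k] k :=
  (LinearMap.mul' k k) ∘ₗ (TensorProduct.map f g)

lemma evalD_tmul [Field k] [AddCommGroup C] [Module k C]
    (f g : Module.Dual k C) (a b : C) : evalD f g (a ⊗ₜ b) = f a * g b := rfl

lemma evalD_comm [Field k] [AddCommGroup C] [Module k C]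
    (f g : Module.Dual k C) (x : C ⊗[k] C) :
    evalD g f x = evalD f g (TensorProduct.comm k C C x) := by
  induction x using TensorProduct.induction_on with
  | zero => simp
  | tmul a b => simp [evalD_tmul, mul_comm]
  | add x y hx hy => simp_all

lemma evalD_coord [Field k] [AddCommGroup C] [Module k C]
    {ι : Type*} (b : Module.Basis ι k C) (i j : ι) (x : C ⊗[k] C) :
    evalD (b.coord i) (b.coord j) x = (b.tensorProduct b).repr x (i, j) := by
  induction x using TensorProduct.induction_on with
  | zero => simp
  | tmul a d => simp [evalD_tmul, Module.Basis.coord_apply, mul_comm, smul_eq_mul]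
  | add x y hx hy => simp_all

lemma eq_zero_of_evalD [Field k] [AddCommGroup C] [Module k C]
    (x : C ⊗[k] C) (h : ∀ f g : Module.Dual k C, evalD f g x = 0) : x = 0 := by
  let b := Module.Free.chooseBasis k C
  have hrepr : (b.tensorProduct b).repr x = 0 := by
    ext p
    have := h (b.coord p.1) (b.coord p.2)
    rwa [evalD_coord] at this
  exact ((b.tensorProduct b).repr.map_eq_zero_iff).mp hrepr

/-- For a coalgebra `C` over a field `k`: `c ∈ coHH₀(C)` iff all convolution
products commute at `c`; consequently evaluation induces a well-defined surjective linear map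
`HH₀(C*) = C*/[C*,C*] → (coHH₀(C))*`. -/
theorem coHH0_iff_and_HH0_surjects (k C : Type*) [Field k] [AddCommGroup C] [Module k C]
    [Coalgebra k C] :
    (∀ c : C, c ∈ coHH0 k C ↔ ∀ f g : Module.Dual k C, conv f g c = conv g f c) ∧
    ∃ π : (Module.Dual k C ⧸ commutatorSub k C) →ₗ[k] Module.Dual k ↥(coHH0 k C),
      Function.Surjective π ∧
      ∀ (f : Module.Dual k C) (c : ↥(coHH0 k C)),
        π (Submodule.Quotient.mk f) c = f (c : C) := by
  have hconv : ∀ (f g : Module.Dual k C) (c : C),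
      conv f g c = evalD f g (Coalgebra.comul (R := k) c) := fun _ _ _ => rfl
  have key : ∀ c : C, c ∈ coHH0 k C ↔
      ∀ f g : Module.Dual k C, conv f g c = conv g f c := by
    intro c
    constructor
    · intro hc f g
      have h0 : Coalgebra.comul (R := k) c =
          TensorProduct.comm k C C (Coalgebra.comul (R := k) c) := by
        have := (LinearMap.mem_ker).mp hc
        simpa [sub_eq_zero] using this
      rw [hconv, hconv, evalD_comm g f, ← h0]
    · intro h
      have : ∀ f g : Module.Dual k C,
          evalD f g (Coalgebra.comul (R := k) c -
            TensorProduct.comm k C C (Coalgebra.comul (R := k) c)) = 0 := by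
        intro f g
        rw [map_sub, ← evalD_comm f g, ← hconv, ← hconv, sub_eq_zero]
        exact h f g
      exact LinearMap.mem_ker.mpr (eq_zero_of_evalD _ this)
  refine ⟨key, ?_⟩
  set L : Module.Dual k C →ₗ[k] Module.Dual k ↥(coHH0 k C) :=
    (coHH0 k C).subtype.dualMap with hL
  have hker : commutatorSub k C ≤ LinearMap.ker L := by
    rw [commutatorSub, Submodule.span_le]
    rintro x ⟨f, g, rfl⟩
    refine LinearMap.mem_ker.mpr ?_
    ext c
    have := ((key c).mp c.2) f g
    simp [hL, LinearMap.dualMap_apply, sub_eq_zero, this]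
  refine ⟨(commutatorSub k C).liftQ L hker, ?_, ?_⟩
  · intro φ
    obtain ⟨f, hf⟩ := LinearMap.dualMap_surjective_of_injective
      (coHH0 k C).injective_subtype φ
    exact ⟨Submodule.Quotient.mk f, by simpa using hf⟩
  · intro f c; rfl
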